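/- Let V*(θ, Σ, 2) denote the optimal two-step expected revenue. For two ads, V*(θ, Σ, 2) = max over i ∈ {1,2} of (θᵢ + ∫_{−∞}^{kᵢ} pᵢ(x)·θⱼ'(x) dx + ∫_{kᵢ}^{∞} pᵢ(x)·θᵢ'(x) dx), where pᵢ is the predictive density of the first observation when ad i is selected, θᵢ'(x), θⱼ'(x) are the posterior means after observing x, and kᵢ is the threshold at which θᵢ'(kᵢ) = θⱼ'(kᵢ). -/

import Mathlib

open MeasureTheory

/-- Density of a univariate Gaussian with mean `m` and variance `v`. -/
noncomputable def gpdf (m v x : ℝ) : ℝ :=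
  (Real.sqrt (2 * Real.pi * v))⁻¹ * Real.exp (-(x - m) ^ 2 / (2 * v))

lemma gpdf_eq (m : ℝ) {v : ℝ} (hv : 0 < v) :
    gpdf m v = ProbabilityTheory.gaussianPDFReal m ⟨v, hv.le⟩ := rfl

lemma gpdf_integrable {v : ℝ} (hv : 0 < v) (m : ℝ) : Integrable (gpdf m v) := by
  rw [gpdf_eq m hv]; exact ProbabilityTheory.integrable_gaussianPDFReal m _

lemma gpdf_integral {v : ℝ} (hv : 0 < v) (m : ℝ) : ∫ x, gpdf m v x = 1 := by
  rw [gpdf_eq m hv]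
  exact ProbabilityTheory.integral_gaussianPDFReal_eq_one m
    (fun h => hv.ne' (congrArg Subtype.val h))

lemma gpdf_shift {v : ℝ} (m x : ℝ) : gpdf 0 v (x - m) = gpdf m v x := by
  simp [gpdf]

lemma gpdf_sub_integrable {v : ℝ} (hv : 0 < v) (m : ℝ) :
    Integrable (fun y : ℝ => gpdf m v y * (y - m)) := by
  have hb : (0:ℝ) < (2*v)⁻¹ := by positivity
  have h1 := (integrable_mul_exp_neg_mul_sq hb).const_mul (Real.sqrt (2 * Real.pi * v))⁻¹
  have heq : (fun y : ℝ => (Real.sqrt (2 * Real.pi * v))⁻¹ * (y * Real.exp (-(2*v)⁻¹ * y ^ 2)))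
      = fun y : ℝ => gpdf 0 v y * y := by
    funext y
    have : -(2*v)⁻¹ * y ^ 2 = -(y - 0) ^ 2 / (2 * v) := by ring
    rw [this]; simp only [gpdf]; ring
  rw [heq] at h1
  have h2 := h1.comp_sub_right m
  refine h2.congr (Filter.Eventually.of_forall fun x => ?_)
  simp [gpdf_shift]

lemma gpdf_mul_id_integrable {v : ℝ} (hv : 0 < v) (m : ℝ) :
    Integrable (fun x => gpdf m v x * x) := by
  have := (gpdf_sub_integrable hv m).add ((gpdf_integrable hv m).const_mul m)
  refine this.congr (Filter.Eventually.of_forall fun x => ?_)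
  simp; ring

lemma gpdf_odd_zero {v : ℝ} (hv : 0 < v) : ∫ y, gpdf 0 v y * y = 0 := by
  have h := MeasureTheory.integral_neg_eq_self (fun y : ℝ => gpdf 0 v y * y) volume
  have heq : (fun y : ℝ => gpdf 0 v (-y) * (-y)) = fun y => -(gpdf 0 v y * y) := by
    funext y; simp only [gpdf, neg_sub, zero_sub, neg_neg, neg_sq]; ring
  rw [heq, integral_neg] at h
  linarith

lemma gpdf_mul_id_integral {v : ℝ} (hv : 0 < v) (m : ℝ) :
    ∫ x, gpdf m v x * x = m := by
  have h1 : ∫ x, gpdf m v x * x = ∫ y, gpdf 0 v y * (y + m) := by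
    rw [← MeasureTheory.integral_sub_right_eq_self (fun y => gpdf 0 v y * (y + m)) m]
    congr 1; funext x; rw [gpdf_shift]; ring_nf
  have h2 : Integrable (fun y : ℝ => gpdf 0 v y * y) := by
    simpa using gpdf_sub_integrable hv 0
  have h3 := (gpdf_integrable hv 0).const_mul m
  rw [h1]
  have : (fun y : ℝ => gpdf 0 v y * (y + m)) = fun y => gpdf 0 v y * y + m * gpdf 0 v y := by
    funext y; ring
  rw [this, integral_add h2 h3, gpdf_odd_zero hv, MeasureTheory.integral_const_mul, gpdf_integral hv]
  ring

lemma gpdf_affine_integrable {v : ℝ} (hv : 0 < v) (m α β : ℝ) :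
    Integrable (fun x => gpdf m v x * (α + β * x)) := by
  have := ((gpdf_integrable hv m).const_mul α).add ((gpdf_mul_id_integrable hv m).const_mul β)
  refine this.congr (Filter.Eventually.of_forall fun x => ?_)
  simp; ring

lemma gpdf_continuous (m v : ℝ) : Continuous (gpdf m v) := by
  unfold gpdf; fun_prop

lemma key_step {v : ℝ} (hv : 0 < v) (θ k : ℝ) (f g : ℝ → ℝ) (α β γ δ : ℝ)
    (hf : ∀ x, f x = α + β * x) (hg : ∀ x, g x = γ + δ * x)
    (hslope : δ < β) (hk : f k = g k) :
    ∫ x, gpdf θ v x * (x + max (f x) (g x)) =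
      θ + ((∫ x in Set.Iic k, gpdf θ v x * g x) + ∫ x in Set.Ici k, gpdf θ v x * f x) := by
  set p := gpdf θ v with hp
  have hfc : Continuous f := by
    have : f = fun x => α + β * x := funext hf
    rw [this]; fun_prop
  have hgc : Continuous g := by
    have : g = fun x => γ + δ * x := funext hg
    rw [this]; fun_prop
  have hpf : Integrable (fun x => p x * f x) := by
    have := gpdf_affine_integrable hv θ α β
    refine this.congr (Filter.Eventually.of_forall fun x => by simp only [hp, hf x])
  have hpg : Integrable (fun x => p x * g x) := by
    have := gpdf_affine_integrable hv θ γ δ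
    refine this.congr (Filter.Eventually.of_forall fun x => by simp only [hp, hg x])
  have hpm : Integrable (fun x => p x * max (f x) (g x)) := by
    refine Integrable.mono' (hpf.abs.add hpg.abs)
      (((gpdf_continuous θ v).mul (hfc.max hgc)).aestronglyMeasurable)
      (Filter.Eventually.of_forall fun x => ?_)
    have h1 : |max (f x) (g x)| ≤ |f x| + |g x| :=
      le_trans (abs_max_le_max_abs_abs) (max_le (le_add_of_nonneg_right (abs_nonneg _))
        (le_add_of_nonneg_left (abs_nonneg _)))
    calc ‖p x * max (f x) (g x)‖ = |p x| * |max (f x) (g x)| := abs_mul _ _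
      _ ≤ |p x| * (|f x| + |g x|) := by
          exact mul_le_mul_of_nonneg_left h1 (abs_nonneg _)
      _ = |p x * f x| + |p x * g x| := by rw [mul_add, abs_mul, abs_mul]
  -- split x + max
  have hsplit : ∫ x, p x * (x + max (f x) (g x)) =
      (∫ x, p x * x) + ∫ x, p x * max (f x) (g x) := by
    rw [← integral_add (gpdf_mul_id_integrable hv θ) hpm]
    congr 1; funext x; ring
  rw [hsplit, gpdf_mul_id_integral hv θ]
  congr 1
  -- comparison facts
  have hkey : ∀ x, f x - g x = (β - δ) * (x - k) := by
    intro x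
    have hkk : α + β * k = γ + δ * k := by rw [← hf k, ← hg k, hk]
    rw [hf x, hg x]; nlinarith [hkk]
  have hIic : ∀ x ∈ Set.Iic k, p x * max (f x) (g x) = p x * g x := by
    intro x hx
    have : f x ≤ g x := by
      have := hkey x
      nlinarith [mul_nonneg (sub_nonneg.2 hslope.le) (sub_nonneg.2 (Set.mem_Iic.1 hx : x ≤ k))]
    rw [max_eq_right this]
  have hIoi : ∀ x ∈ Set.Ioi k, p x * max (f x) (g x) = p x * f x := by
    intro x hx
    have : g x ≤ f x := by
      have := hkey x
      nlinarith [mul_nonneg (sub_nonneg.2 hslope.le) (sub_nonneg.2 (le_of_lt (Set.mem_Ioi.1 hx)))]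
    rw [max_eq_left this]
  rw [← intervalIntegral.integral_Iic_add_Ioi (b := k) hpm.integrableOn hpm.integrableOn]
  congr 1
  · exact setIntegral_congr_fun measurableSet_Iic hIic
  · rw [MeasureTheory.integral_Ici_eq_integral_Ioi]
    exact setIntegral_congr_fun measurableSet_Ioi hIoi

/-- Two-step value iteration for two correlated Gaussian ads.  Selecting ad `i` first, the
first observation has predictive density `pᵢ = N(θᵢ, σᵢ² + σ₀²)` and after observing `x` the
posterior means are `θᵢ'(x) = θᵢ + σᵢ²(x − θᵢ)/(σᵢ² + σ₀²)` and
`θⱼ'(x) = θⱼ + σᵢⱼ(x − θᵢ)/(σᵢ² + σ₀²)`; `kᵢ` is the threshold where `θᵢ'(kᵢ) = θⱼ'(kᵢ)`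
(well defined since `σᵢ² > σᵢⱼ`).  The Bellman two-step optimal value
`V*(θ, Σ, 2) = max_i E[Xᵢ + max_j θⱼ'(Xᵢ)]` equals
`max_i (θᵢ + ∫_{−∞}^{kᵢ} pᵢ(x)θⱼ'(x) dx + ∫_{kᵢ}^{∞} pᵢ(x)θᵢ'(x) dx)`. -/
theorem two_step_value_regional_integrals
    (θ1 θ2 σ1sq σ2sq σ12 σ0sq k1 k2 : ℝ)
    (h0 : 0 < σ0sq) (h1 : 0 < σ1sq) (h2 : 0 < σ2sq)
    (hs1 : σ12 < σ1sq) (hs2 : σ12 < σ2sq)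
    (p1 : ℝ → ℝ) (hp1 : p1 = gpdf θ1 (σ1sq + σ0sq))
    (p2 : ℝ → ℝ) (hp2 : p2 = gpdf θ2 (σ2sq + σ0sq))
    (m11 m12 m22 m21 : ℝ → ℝ)
    (hm11 : m11 = fun x => θ1 + σ1sq * (x - θ1) / (σ1sq + σ0sq))
    (hm12 : m12 = fun x => θ2 + σ12 * (x - θ1) / (σ1sq + σ0sq))
    (hm22 : m22 = fun x => θ2 + σ2sq * (x - θ2) / (σ2sq + σ0sq))
    (hm21 : m21 = fun x => θ1 + σ12 * (x - θ2) / (σ2sq + σ0sq))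
    (hk1 : m11 k1 = m12 k1) (hk2 : m22 k2 = m21 k2) :
    max (∫ x : ℝ, p1 x * (x + max (m11 x) (m12 x)))
        (∫ x : ℝ, p2 x * (x + max (m22 x) (m21 x))) =
      max (θ1 + ((∫ x in Set.Iic k1, p1 x * m12 x) + ∫ x in Set.Ici k1, p1 x * m11 x))
          (θ2 + ((∫ x in Set.Iic k2, p2 x * m21 x) + ∫ x in Set.Ici k2, p2 x * m22 x)) := by
  have hv1 : (0:ℝ) < σ1sq + σ0sq := by linarith
  have hv2 : (0:ℝ) < σ2sq + σ0sq := by linarith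
  subst hp1 hp2
  congr 1
  · exact key_step hv1 θ1 k1 m11 m12
      (θ1 - σ1sq * θ1 / (σ1sq + σ0sq)) (σ1sq / (σ1sq + σ0sq))
      (θ2 - σ12 * θ1 / (σ1sq + σ0sq)) (σ12 / (σ1sq + σ0sq))
      (fun x => by rw [hm11]; field_simp; ring)
      (fun x => by rw [hm12]; field_simp; ring)
      (by gcongr) hk1
  · exact key_step hv2 θ2 k2 m22 m21
      (θ2 - σ2sq * θ2 / (σ2sq + σ0sq)) (σ2sq / (σ2sq + σ0sq))
      (θ1 - σ12 * θ2 / (σ2sq + σ0sq)) (σ12 / (σ2sq + σ0sq))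
      (fun x => by rw [hm22]; field_simp; ring)
      (fun x => by rw [hm21]; field_simp; ring)
      (by gcongr) hk2
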